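/- Let p, q, r, s, t, u be integers with p ≠ 0 and s ≠ 0, and define V(n) = p⌊nφ⌋ + qn + r and W(n) = s⌊nφ⌋ + tn + u for n ≥ 1. If V and W are injective and complementary, then there exist integers x and y such that s = p·x and 5p²x² − 4x = y². -/

import Mathlib

noncomputable def phi : ℝ := (1 + Real.sqrt 5) / 2

/-- Two sequences (indexed by `n ≥ 1`) are complementary if their value sets are
disjoint and their union is the set of positive integers. -/
def ComplementaryPair (V W : ℕ → ℤ) : Prop :=
  Disjoint {z : ℤ | ∃ n : ℕ, 1 ≤ n ∧ V n = z} {z : ℤ | ∃ n : ℕ, 1 ≤ n ∧ W n = z} ∧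
  {z : ℤ | ∃ n : ℕ, 1 ≤ n ∧ V n = z} ∪ {z : ℤ | ∃ n : ℕ, 1 ≤ n ∧ W n = z} = {z : ℤ | 0 < z}

lemma sqrt5_sq : Real.sqrt 5 ^ 2 = 5 := Real.sq_sqrt (by norm_num)

lemma phi_pos : 0 < phi := by
  have := Real.sqrt_nonneg 5
  unfold phi; linarith

lemma phi_sq : phi ^ 2 = phi + 1 := by
  have h := sqrt5_sq
  unfold phi; nlinarith [h]

lemma phi_irr : Irrational phi := by
  have h5 : Irrational (Real.sqrt 5) := by
    simpa using (by norm_num : Nat.Prime 5).irrational_sqrt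
  have h1 : Irrational ((1 : ℚ) + Real.sqrt 5) := h5.ratCast_add 1
  have h2 : Irrational (((1 : ℚ) + Real.sqrt 5) / (2 : ℤ)) := h1.div_intCast (by norm_num)
  have : phi = ((1 : ℚ) + Real.sqrt 5) / (2 : ℤ) := by
    unfold phi; push_cast; ring
  rwa [this]

lemma int_linear_indep {a b : ℤ} (h : (a : ℝ) * phi + (b : ℝ) = 0) : a = 0 ∧ b = 0 := by
  have ha : a = 0 := by
    by_contra ha
    have ha' : (a : ℝ) ≠ 0 := Int.cast_ne_zero.mpr ha
    have : phi = (((-b : ℚ) / (a : ℚ) : ℚ) : ℝ) := by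
      push_cast
      field_simp
      linarith
    exact phi_irr ⟨_, this.symm⟩
  refine ⟨ha, ?_⟩
  have : (b : ℝ) = 0 := by rw [ha] at h; simpa using h
  exact_mod_cast this

open Finset in
open scoped Classical in
/-- Counting lemma: the number of values of `f` in `[1, M]` is roughly `M/α`. -/
lemma counting (α c : ℝ) (hα : 0 < α) (hc : 0 ≤ c) (f : ℕ → ℤ)
    (hbnd : ∀ n : ℕ, 1 ≤ n → |(f n : ℝ) - α * n| ≤ c)
    (hpos : ∀ n : ℕ, 1 ≤ n → 1 ≤ f n)
    (finj : ∀ m n : ℕ, 1 ≤ m → 1 ≤ n → f m = f n → m = n)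
    (M : ℕ) :
    ((M : ℝ) - c) / α - 1 ≤
      (((Finset.Icc (1 : ℤ) (M : ℤ)).filter (fun z => ∃ n, 1 ≤ n ∧ f n = z)).card : ℝ) ∧
    ((((Finset.Icc (1 : ℤ) (M : ℤ)).filter (fun z => ∃ n, 1 ≤ n ∧ f n = z)).card : ℝ)) ≤
      ((M : ℝ) + c) / α := by
  set K := ⌊((M : ℝ) + c) / α⌋₊ with hK
  set A := (Finset.Icc 1 K).filter (fun n => f n ≤ (M : ℤ)) with hA
  set T := (Finset.Icc (1 : ℤ) (M : ℤ)).filter (fun z => ∃ n, 1 ≤ n ∧ f n = z) with hT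
  have hnK : ∀ n : ℕ, 1 ≤ n → f n ≤ (M : ℤ) → n ≤ K := by
    intro n hn hfn
    have hb := abs_le.mp (hbnd n hn)
    have h2 : (f n : ℝ) ≤ (M : ℝ) := by exact_mod_cast hfn
    have hnr : (n : ℝ) ≤ ((M : ℝ) + c) / α := by
      rw [le_div_iff₀ hα]
      nlinarith [hb.2]
    exact Nat.le_floor hnr
  have hTA : T = A.image f := by
    ext z
    simp only [hT, hA, Finset.mem_filter, Finset.mem_Icc, Finset.mem_image]
    constructor
    · rintro ⟨⟨hz1, hz2⟩, n, hn, rfl⟩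
      exact ⟨n, ⟨⟨hn, hnK n hn hz2⟩, hz2⟩, rfl⟩
    · rintro ⟨n, ⟨⟨hn, -⟩, hfn⟩, rfl⟩
      exact ⟨⟨hpos n hn, hfn⟩, n, hn, rfl⟩
  have hcardTA : T.card = A.card := by
    rw [hTA]
    apply Finset.card_image_of_injOn
    intro m hm n hn hmn
    simp only [hA, Finset.mem_coe, Finset.mem_filter, Finset.mem_Icc] at hm hn
    exact finj m n hm.1.1 hn.1.1 hmn
  have hupper : (T.card : ℝ) ≤ ((M : ℝ) + c) / α := by
    have h1 : A.card ≤ K := by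
      calc A.card ≤ (Finset.Icc 1 K).card := Finset.card_filter_le _ _
        _ = K := by rw [Nat.card_Icc]; omega
    have h2 : (K : ℝ) ≤ ((M : ℝ) + c) / α := by
      apply Nat.floor_le
      positivity
    rw [hcardTA]
    calc (A.card : ℝ) ≤ (K : ℝ) := by exact_mod_cast h1
      _ ≤ _ := h2
  refine ⟨?_, hupper⟩
  by_cases h0 : 0 ≤ ((M : ℝ) - c) / α
  · set L := ⌊((M : ℝ) - c) / α⌋₊ with hL
    have hLle : (L : ℝ) ≤ ((M : ℝ) - c) / α := Nat.floor_le h0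
    have hsub : Finset.Icc 1 L ⊆ A := by
      intro n hn
      simp only [Finset.mem_Icc] at hn
      have hn1 : (1 : ℕ) ≤ n := hn.1
      have hnL : (n : ℝ) ≤ (L : ℝ) := by exact_mod_cast hn.2
      have hb := abs_le.mp (hbnd n hn1)
      have hfnM : (f n : ℝ) ≤ (M : ℝ) := by
        have h1 : α * (n : ℝ) ≤ (M : ℝ) - c := by
          calc α * (n : ℝ) ≤ α * (((M : ℝ) - c) / α) := by
                apply mul_le_mul_of_nonneg_left _ hα.le
                linarith
            _ = (M : ℝ) - c := by field_simp
        linarith [hb.1]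
      have hfnM' : f n ≤ (M : ℤ) := by exact_mod_cast hfnM
      simp only [hA, Finset.mem_filter, Finset.mem_Icc]
      exact ⟨⟨hn1, hnK n hn1 hfnM'⟩, hfnM'⟩
    have hcardL : L ≤ A.card := by
      calc L = (Finset.Icc 1 L).card := by rw [Nat.card_Icc]; omega
        _ ≤ A.card := Finset.card_le_card hsub
    have hLlb : ((M : ℝ) - c) / α - 1 ≤ (L : ℝ) := by
      have := Nat.lt_floor_add_one (((M : ℝ) - c) / α)
      linarith
    rw [hcardTA]
    calc ((M : ℝ) - c) / α - 1 ≤ (L : ℝ) := hLlb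
      _ ≤ (A.card : ℝ) := by exact_mod_cast hcardL
  · push_neg at h0
    have : (0 : ℝ) ≤ (T.card : ℝ) := by positivity
    linarith

/-- If `V = pA + q·Id + r` and `W = sA + t·Id + u` (with `A(n) = ⌊nφ⌋`, `p ≠ 0`, `s ≠ 0`)
are injective and complementary, then `p` divides `s`, say `s = px`, and `p` is a solution
of the generalized Pell equation `5p²x² − 4x = y²`. -/
theorem complementary_pair_pell (p q r s t u : ℤ) (hp : p ≠ 0) (hs : s ≠ 0)
    (V W : ℕ → ℤ)
    (hV : ∀ n : ℕ, 1 ≤ n → V n = p * ⌊(n : ℝ) * phi⌋ + q * n + r)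
    (hW : ∀ n : ℕ, 1 ≤ n → W n = s * ⌊(n : ℝ) * phi⌋ + t * n + u)
    (hVinj : ∀ m n : ℕ, 1 ≤ m → 1 ≤ n → V m = V n → m = n)
    (hWinj : ∀ m n : ℕ, 1 ≤ m → 1 ≤ n → W m = W n → m = n)
    (hcomp : ComplementaryPair V W) :
    ∃ x y : ℤ, s = p * x ∧ 5 * p ^ 2 * x ^ 2 - 4 * x = y ^ 2 := by
  classical
  obtain ⟨hdisj, hunion⟩ := hcomp
  -- positivity of all values
  have hVpos : ∀ n : ℕ, 1 ≤ n → 1 ≤ V n := by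
    intro n hn
    have : V n ∈ {z : ℤ | 0 < z} := by
      rw [← hunion]; exact Or.inl ⟨n, hn, rfl⟩
    exact this
  have hWpos : ∀ n : ℕ, 1 ≤ n → 1 ≤ W n := by
    intro n hn
    have : W n ∈ {z : ℤ | 0 < z} := by
      rw [← hunion]; exact Or.inr ⟨n, hn, rfl⟩
    exact this
  set α : ℝ := (p : ℝ) * phi + (q : ℝ) with hαdef
  set β : ℝ := (s : ℝ) * phi + (t : ℝ) with hβdef
  set cV : ℝ := |(p : ℝ)| + |(r : ℝ)| with hcV
  set cW : ℝ := |(s : ℝ)| + |(u : ℝ)| with hcW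
  have hcVnn : 0 ≤ cV := by positivity
  have hcWnn : 0 ≤ cW := by positivity
  -- the key bound |V n - α n| ≤ cV
  have hbndgen : ∀ (a b c : ℤ) (n : ℕ), 1 ≤ n →
      |((a * ⌊(n : ℝ) * phi⌋ + b * n + c : ℤ) : ℝ) - ((a : ℝ) * phi + b) * n| ≤ |(a : ℝ)| + |(c : ℝ)| := by
    intro a b c n hn
    have hfl1 : ((⌊(n : ℝ) * phi⌋ : ℤ) : ℝ) ≤ (n : ℝ) * phi := Int.floor_le _
    have hfl2 : (n : ℝ) * phi - 1 < ((⌊(n : ℝ) * phi⌋ : ℤ) : ℝ) := by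
      have := Int.lt_floor_add_one ((n : ℝ) * phi)
      linarith
    have key : ((a * ⌊(n : ℝ) * phi⌋ + b * n + c : ℤ) : ℝ) - ((a : ℝ) * phi + b) * n
        = (a : ℝ) * (((⌊(n : ℝ) * phi⌋ : ℤ) : ℝ) - (n : ℝ) * phi) + (c : ℝ) := by
      push_cast; ring
    rw [key]
    have h1 : |(a : ℝ) * (((⌊(n : ℝ) * phi⌋ : ℤ) : ℝ) - (n : ℝ) * phi)| ≤ |(a : ℝ)| := by
      rw [abs_mul]
      have : |((⌊(n : ℝ) * phi⌋ : ℤ) : ℝ) - (n : ℝ) * phi| ≤ 1 := by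
        rw [abs_le]; constructor <;> linarith
      nlinarith [abs_nonneg (a : ℝ)]
    calc |(a : ℝ) * (((⌊(n : ℝ) * phi⌋ : ℤ) : ℝ) - (n : ℝ) * phi) + (c : ℝ)|
        ≤ |(a : ℝ) * (((⌊(n : ℝ) * phi⌋ : ℤ) : ℝ) - (n : ℝ) * phi)| + |(c : ℝ)| := abs_add_le _ _
      _ ≤ |(a : ℝ)| + |(c : ℝ)| := by linarith
  have hVbnd : ∀ n : ℕ, 1 ≤ n → |(V n : ℝ) - α * n| ≤ cV := by
    intro n hn
    rw [hV n hn]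
    exact hbndgen p q r n hn
  have hWbnd : ∀ n : ℕ, 1 ≤ n → |(W n : ℝ) - β * n| ≤ cW := by
    intro n hn
    rw [hW n hn]
    exact hbndgen s t u n hn
  -- positivity of growth rates
  have hposgen : ∀ (γ : ℝ) (c : ℝ) (f : ℕ → ℤ), 0 ≤ c →
      (∀ n : ℕ, 1 ≤ n → |(f n : ℝ) - γ * n| ≤ c) →
      (∀ n : ℕ, 1 ≤ n → 1 ≤ f n) → γ ≠ 0 → 0 < γ := by
    intro γ c f hc hbnd hpos hγ
    rcases lt_or_gt_of_ne hγ with hneg | hpos'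
    · exfalso
      obtain ⟨N, hN⟩ := exists_nat_gt (c / (-γ))
      set n := N + 1 with hn
      have hn1 : (1 : ℕ) ≤ n := by omega
      have hNn : (N : ℝ) ≤ (n : ℝ) := by exact_mod_cast Nat.le_succ N
      have hgtn : c / (-γ) < (n : ℝ) := lt_of_lt_of_le hN hNn
      have h2 : c < (n : ℝ) * (-γ) := by
        rw [div_lt_iff₀ (by linarith : (0:ℝ) < -γ)] at hgtn
        linarith
      have hb := abs_le.mp (hbnd n hn1)
      have hfn : (1 : ℝ) ≤ (f n : ℝ) := by exact_mod_cast hpos n hn1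
      nlinarith
    · exact hpos'
  have hαne : α ≠ 0 := by
    intro h
    have := (int_linear_indep (a := p) (b := q) (by rw [hαdef] at h; exact_mod_cast h)).1
    exact hp this
  have hβne : β ≠ 0 := by
    intro h
    have := (int_linear_indep (a := s) (b := t) (by rw [hβdef] at h; exact_mod_cast h)).1
    exact hs this
  have hαpos : 0 < α := hposgen α cV V hcVnn hVbnd hVpos hαne
  have hβpos : 0 < β := hposgen β cW W hcWnn hWbnd hWpos hβne
  -- counting: card of values in [1,M]
  have hsum : ∀ M : ℕ,
      ((Finset.Icc (1 : ℤ) (M : ℤ)).filter (fun z => ∃ n, 1 ≤ n ∧ V n = z)).card +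
      ((Finset.Icc (1 : ℤ) (M : ℤ)).filter (fun z => ∃ n, 1 ≤ n ∧ W n = z)).card = M := by
    intro M
    set TV := (Finset.Icc (1 : ℤ) (M : ℤ)).filter (fun z => ∃ n, 1 ≤ n ∧ V n = z) with hTV
    set TW := (Finset.Icc (1 : ℤ) (M : ℤ)).filter (fun z => ∃ n, 1 ≤ n ∧ W n = z) with hTW
    have hU : TV ∪ TW = Finset.Icc (1 : ℤ) (M : ℤ) := by
      ext z
      simp only [hTV, hTW, Finset.mem_union, Finset.mem_filter, Finset.mem_Icc]
      constructor
      · rintro (⟨h, -⟩ | ⟨h, -⟩) <;> exact h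
      · intro hz
        have hz0 : z ∈ {z : ℤ | 0 < z} := by
          simp only [Set.mem_setOf_eq]; omega
        rw [← hunion] at hz0
        rcases hz0 with h | h
        · exact Or.inl ⟨hz, h⟩
        · exact Or.inr ⟨hz, h⟩
    have hdis : Disjoint TV TW := by
      rw [Finset.disjoint_left]
      intro z hz1 hz2
      simp only [hTV, hTW, Finset.mem_filter] at hz1 hz2
      exact Set.disjoint_left.mp hdisj hz1.2 hz2.2
    have := Finset.card_union_of_disjoint hdis
    rw [hU] at this
    rw [← this, Int.card_Icc]
    omega
  -- derive 1/α + 1/β = 1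
  have hkey : 1 / α + 1 / β = 1 := by
    by_contra hne
    set δ := |1 - 1 / α - 1 / β| with hδ
    have hδpos : 0 < δ := by
      rw [hδ, abs_pos]
      intro h
      apply hne
      linarith
    set C := cV / α + cW / β + 2 with hC
    have hCpos : 0 < C := by positivity
    obtain ⟨M, hM⟩ := exists_nat_gt (C / δ)
    have hMpos : (0 : ℝ) < M := lt_of_le_of_lt (by positivity) hM
    have hAc := counting α cV hαpos hcVnn V hVbnd hVpos hVinj M
    have hBc := counting β cW hβpos hcWnn W hWbnd hWpos hWinj M
    have hsumM := hsum M
    set a := ((Finset.Icc (1 : ℤ) (M : ℤ)).filter (fun z => ∃ n, 1 ≤ n ∧ V n = z)).card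
    set b := ((Finset.Icc (1 : ℤ) (M : ℤ)).filter (fun z => ∃ n, 1 ≤ n ∧ W n = z)).card
    have hab : (a : ℝ) + (b : ℝ) = (M : ℝ) := by exact_mod_cast congrArg (Nat.cast : ℕ → ℝ) hsumM
    have hgap : |(M : ℝ) * (1 - 1 / α - 1 / β)| ≤ C := by
      have e : (M : ℝ) * (1 - 1 / α - 1 / β) = (M : ℝ) - (M : ℝ) / α - (M : ℝ) / β := by
        ring
      have l1 := hAc.1
      have l2 := hAc.2
      have l3 := hBc.1
      have l4 := hBc.2
      rw [show ((M : ℝ) - cV) / α = (M : ℝ) / α - cV / α from by ring] at l1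
      rw [show ((M : ℝ) + cV) / α = (M : ℝ) / α + cV / α from by ring] at l2
      rw [show ((M : ℝ) - cW) / β = (M : ℝ) / β - cW / β from by ring] at l3
      rw [show ((M : ℝ) + cW) / β = (M : ℝ) / β + cW / β from by ring] at l4
      rw [abs_le, e, hC]
      constructor
      · linarith
      · linarith
    rw [abs_mul, abs_of_pos hMpos, ← hδ] at hgap
    rw [div_lt_iff₀ hδpos] at hM
    linarith
  -- turn into the two integer equations
  have hαβ : α * β = α + β := by
    field_simp at hkey
    linarith
  have hE : ((p * s + p * t + q * s - p - s : ℤ) : ℝ) * phi + ((p * s + q * t - q - t : ℤ) : ℝ) = 0 := by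
    have h2 := phi_sq
    rw [hαdef, hβdef] at hαβ
    push_cast
    linear_combination hαβ - (p : ℝ) * (s : ℝ) * h2
  obtain ⟨hE1, hE2⟩ := int_linear_indep hE
  -- now pure algebra
  have h1 : p * s + p * t + q * s - p - s = 0 := hE1
  have h2 : p * s + q * t - q - t = 0 := hE2
  set D : ℤ := (q - 1) ^ 2 + p * (q - 1) - p ^ 2 with hD
  set Nb : ℤ := (t - 1) ^ 2 + s * (t - 1) - s ^ 2 with hNb
  have hDNb : D * Nb = 1 := by
    rw [hD, hNb]
    linear_combination (p * s + q * t - q - t + 2 + (p * s + p * t + q * s - p - s)) * h2 +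
      (1 - (p * s + p * t + q * s - p - s)) * h1
  have hsD : s * D = -p := by
    rw [hD]
    linear_combination (q - 1) * h1 - p * h2
  have hunit := Int.isUnit_iff.mp (IsUnit.of_mul_eq_one Nb hDNb)
  have hDsq : D * D = 1 := by rcases hunit with h | h <;> rw [h] <;> ring
  refine ⟨-D, p + 2 * q - 2, ?_, ?_⟩
  · have h3 : s * (D * D) = -p * D := by rw [← mul_assoc, hsD]
    rw [hDsq] at h3
    linarith
  · rcases hunit with h | h
    · have hq : (q - 1) ^ 2 + p * (q - 1) - p ^ 2 = 1 := by rw [← hD, h]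
      rw [h]; linear_combination (-4) * hq
    · have hq : (q - 1) ^ 2 + p * (q - 1) - p ^ 2 = -1 := by rw [← hD, h]
      rw [h]; linear_combination (-4) * hq
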